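/- In the two-candidate reduced instance, for every B ⊆ {1, …, m}, setting W = {v_i : i ∈ B}: the number of vertices in H_W voting for candidate 0 equals 3ℓm − ℓ + (m − |B|), and the number of vertices in H_W voting for candidate 1 equals 1 + m·|⋃_{i ∈ {1,…,m} \ B} S_i|. -/
import Mathlib


/-- Vertices of the two-candidate reduced instance: the path vertices
`u_1, …, u_{ℓ(3m−1)}` (0-indexed as `u i` for `i : Fin (ℓ * (3 * m - 1))`, so `u_1` is
`u ⟨0, _⟩`), the vertex `r`, the vertices `v_1, …, v_m`, and the vertices `w_{j,k}` for
`j ∈ [m]`, `k ∈ [3ℓ]` (both 0-indexed). -/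
inductive V2 (ℓ m : ℕ) : Type
  | u (i : Fin (ℓ * (3 * m - 1))) : V2 ℓ m
  | r : V2 ℓ m
  | v (i : Fin m) : V2 ℓ m
  | w (j : Fin m) (k : Fin (3 * ℓ)) : V2 ℓ m
  deriving DecidableEq

/-- Base edge relation of the two-candidate reduced instance: `u_i ~ u_{i+1}`,
`u_{ℓ(3m−1)} ~ r`, `r ~ v_i` for all `i`, and `v_i ~ w_{j,k}` iff `k ∈ S i`. -/
def baseRel2 (ℓ m : ℕ) (S : Fin m → Finset (Fin (3 * ℓ))) :
    V2 ℓ m → V2 ℓ m → Prop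
  | .u i, .u i' => (i : ℕ) + 1 = (i' : ℕ)
  | .u i, .r => (i : ℕ) + 1 = ℓ * (3 * m - 1)
  | .r, .v _ => True
  | .v i, .w _ k => k ∈ S i
  | _, _ => False

/-- The graph of the two-candidate reduced instance. -/
def G2 (ℓ m : ℕ) (S : Fin m → Finset (Fin (3 * ℓ))) : SimpleGraph (V2 ℓ m) :=
  SimpleGraph.fromRel (baseRel2 ℓ m S)

/-- The voting function of the two-candidate reduced instance: `u`'s and `v`'s vote for
candidate `0`; `r` and the `w`'s vote for candidate `1`. -/
def τ2 (ℓ m : ℕ) : V2 ℓ m → Fin 2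
  | .u _ => 0
  | .r => 1
  | .v _ => 0
  | .w _ _ => 1

/-- The distinguished vertex `x = u_1`. -/
def x2 (ℓ m : ℕ) (h : 0 < ℓ * (3 * m - 1)) : V2 ℓ m := V2.u ⟨0, h⟩

/-- `HW G W x`: the set of vertices reachable from `x` in the subgraph of `G` induced on
the complement of `W` (each step of a connecting walk must avoid `W`). -/
def HW {V : Type*} (G : SimpleGraph V) (W : Set V) (x : V) : Set V :=
  {z | Relation.ReflTransGen (fun a b => G.Adj a b ∧ a ∉ W ∧ b ∉ W) x z}

/-- With two candidates, candidate `1` uniquely wins the election restricted to `W` iff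
`|H_W ∩ τ⁻¹(1)| > |H_W ∩ τ⁻¹(0)|`. -/
def wins2 (ℓ m : ℕ) (S : Fin m → Finset (Fin (3 * ℓ))) (x : V2 ℓ m)
    (W : Set (V2 ℓ m)) : Prop :=
  (HW (G2 ℓ m S) W x ∩ τ2 ℓ m ⁻¹' {0}).ncard <
    (HW (G2 ℓ m S) W x ∩ τ2 ℓ m ⁻¹' {1}).ncard

namespace VoteAux

variable {ℓ m : ℕ}

/-- Predicate describing the reachable set. -/
def P (ℓ m : ℕ) (S : Fin m → Finset (Fin (3 * ℓ))) (B : Finset (Fin m)) : V2 ℓ m → Prop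
  | .u _ => True
  | .r => True
  | .v i => i ∉ B
  | .w _ k => ∃ i, i ∉ B ∧ k ∈ S i

lemma closed (S : Fin m → Finset (Fin (3 * ℓ))) (B : Finset (Fin m))
    (a b : V2 ℓ m) (ha : P ℓ m S B a) (hadj : (G2 ℓ m S).Adj a b)
    (hb : b ∉ {z : V2 ℓ m | ∃ i ∈ B, z = V2.v i}) :
    P ℓ m S B b := by
  rw [G2, SimpleGraph.fromRel_adj] at hadj
  obtain ⟨hne, h | h⟩ := hadj <;> cases a <;> cases b <;>
    simp_all [baseRel2, P] <;> tauto

lemma reach (S : Fin m → Finset (Fin (3 * ℓ))) (B : Finset (Fin m))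
    (hpos : 0 < ℓ * (3 * m - 1)) (z : V2 ℓ m) (hz : P ℓ m S B z) :
    z ∈ HW (G2 ℓ m S) {z | ∃ i ∈ B, z = V2.v i} (V2.u ⟨0, hpos⟩) := by
  set W : Set (V2 ℓ m) := {z | ∃ i ∈ B, z = V2.v i} with hW
  set R : V2 ℓ m → V2 ℓ m → Prop :=
    fun a b => (G2 ℓ m S).Adj a b ∧ a ∉ W ∧ b ∉ W with hR
  have hWu : ∀ i, (V2.u i : V2 ℓ m) ∉ W := by simp [hW]
  have hWr : (V2.r : V2 ℓ m) ∉ W := by simp [hW]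
  have hWw : ∀ j k, (V2.w j k : V2 ℓ m) ∉ W := by simp [hW]
  have hWv : ∀ i, i ∉ B → (V2.v i : V2 ℓ m) ∉ W := by
    intro i hi; simp [hW]; exact hi
  have hu : ∀ n (h : n < ℓ * (3 * m - 1)),
      Relation.ReflTransGen R (V2.u ⟨0, hpos⟩) (V2.u ⟨n, h⟩) := by
    intro n
    induction n with
    | zero => intro h; exact .refl
    | succ n ih =>
      intro h
      refine .tail (ih (by omega)) ?_
      refine ⟨?_, hWu _, hWu _⟩
      rw [G2, SimpleGraph.fromRel_adj]
      exact ⟨by simp [Fin.ext_iff], Or.inl (by simp [baseRel2])⟩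
  have hr : Relation.ReflTransGen R (V2.u ⟨0, hpos⟩) V2.r := by
    refine .tail (hu (ℓ * (3 * m - 1) - 1) (by omega)) ?_
    refine ⟨?_, hWu _, hWr⟩
    rw [G2, SimpleGraph.fromRel_adj]
    exact ⟨by simp, Or.inl (by simp [baseRel2]; omega)⟩
  have hv : ∀ i, i ∉ B → Relation.ReflTransGen R (V2.u ⟨0, hpos⟩) (V2.v i) := by
    intro i hi
    refine .tail hr ⟨?_, hWr, hWv i hi⟩
    rw [G2, SimpleGraph.fromRel_adj]
    exact ⟨by simp, Or.inl (by simp [baseRel2])⟩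
  cases z with
  | u i => exact hu i.1 i.2
  | r => exact hr
  | v i => exact hv i hz
  | w j k =>
    obtain ⟨i, hi, hk⟩ := hz
    refine .tail (hv i hi) ⟨?_, hWv i hi, hWw j k⟩
    rw [G2, SimpleGraph.fromRel_adj]
    exact ⟨by simp, Or.inl (by simpa [baseRel2] using hk)⟩

lemma HW_eq (S : Fin m → Finset (Fin (3 * ℓ))) (B : Finset (Fin m))
    (hpos : 0 < ℓ * (3 * m - 1)) :
    HW (G2 ℓ m S) {z | ∃ i ∈ B, z = V2.v i} (V2.u ⟨0, hpos⟩)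
      = {z | P ℓ m S B z} := by
  ext z
  constructor
  · intro hz
    induction hz with
    | refl => trivial
    | tail _ h ih => exact closed S B _ _ ih h.1 h.2.2
  · exact reach S B hpos z

end VoteAux

/-- Vote counts for a deletion set `W = {v_i : i ∈ B}`: candidate `0` gets
`3ℓm − ℓ + (m − |B|)` votes and candidate `1` gets `1 + m·|⋃_{i ∉ B} S_i|` votes. -/
theorem vote_counts_after_deleting_v (ℓ m : ℕ) (hℓ : 1 ≤ ℓ) (hm : 1 ≤ m)
    (S : Fin m → Finset (Fin (3 * ℓ)))
    (hS3 : ∀ i, (S i).card = 3)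
    (hcov : Finset.univ.biUnion S = Finset.univ)
    (B : Finset (Fin m)) :
    (HW (G2 ℓ m S) {z | ∃ i ∈ B, z = V2.v i} (x2 ℓ m (Nat.mul_pos hℓ (by omega))) ∩
        τ2 ℓ m ⁻¹' {0}).ncard = 3 * ℓ * m - ℓ + (m - B.card) ∧
    (HW (G2 ℓ m S) {z | ∃ i ∈ B, z = V2.v i} (x2 ℓ m (Nat.mul_pos hℓ (by omega))) ∩
        τ2 ℓ m ⁻¹' {1}).ncard = 1 + m * ((Finset.univ \ B).biUnion S).card := by
  have hpos : 0 < ℓ * (3 * m - 1) := Nat.mul_pos hℓ (by omega)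
  have hHW := VoteAux.HW_eq S B hpos
  rw [show x2 ℓ m (Nat.mul_pos hℓ (by omega)) = V2.u ⟨0, hpos⟩ from rfl] at *
  set U : Finset (Fin (3 * ℓ)) := (Finset.univ \ B).biUnion S with hU
  -- Finsets capturing the two intersections
  set A0 : Finset (V2 ℓ m) :=
    (Finset.univ.image (V2.u : Fin (ℓ * (3 * m - 1)) → V2 ℓ m)) ∪
      ((Finset.univ \ B).image V2.v) with hA0
  set A1 : Finset (V2 ℓ m) :=
    {V2.r} ∪ (Finset.univ ×ˢ U).image (fun p => V2.w p.1 p.2) with hA1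
  have e0 : HW (G2 ℓ m S) {z | ∃ i ∈ B, z = V2.v i} (V2.u ⟨0, hpos⟩) ∩
      τ2 ℓ m ⁻¹' {0} = ↑A0 := by
    rw [hHW]
    ext z
    cases z <;> simp [VoteAux.P, τ2, hA0, hU, Finset.mem_biUnion]
  have e1 : HW (G2 ℓ m S) {z | ∃ i ∈ B, z = V2.v i} (V2.u ⟨0, hpos⟩) ∩
      τ2 ℓ m ⁻¹' {1} = ↑A1 := by
    rw [hHW]
    ext z
    cases z <;> simp [VoteAux.P, τ2, hA1, hU, Finset.mem_biUnion] <;> tauto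
  rw [e0, e1, Set.ncard_coe_finset, Set.ncard_coe_finset]
  constructor
  · rw [hA0, Finset.card_union_of_disjoint (by
      simp [Finset.disjoint_left])]
    rw [Finset.card_image_of_injective _ (fun a b h => by simpa using h),
      Finset.card_image_of_injective _ (fun a b h => by simpa using h)]
    rw [Finset.card_univ, Fintype.card_fin, Finset.card_sdiff_of_subset (Finset.subset_univ _),
      Finset.card_univ, Fintype.card_fin]
    have h1 : ℓ * (3 * m - 1) + ℓ = ℓ * (3 * m) := by
      rw [← Nat.mul_succ]; congr 1; omega
    have h2 : ℓ * (3 * m) = 3 * ℓ * m := by ring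
    omega
  · rw [hA1, Finset.card_union_of_disjoint (by simp)]
    rw [Finset.card_image_of_injective _ (fun a b h => by
      simpa [Prod.ext_iff] using h)]
    rw [Finset.card_product, Finset.card_univ, Fintype.card_fin, Finset.card_singleton]
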